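/- arXiv:2407.00846 — 3 statements merged into one kernel-verified Lean document; each statement's English description precedes it below -/
import Mathlib

section
/- With the composite variable ỹ defined as Y on {D=0} and as constant c on {D=1} where c is below the support of Y on {D=0}, if P(D=1) < τ then the value of the τ-th quantile of ỹ does not depend on the choice of c: for any two constants c₁, c₂ both strictly below the infimum of the support of Y on {D=0}, the corresponding composite variables have the same τ-th quantile. -/
open MeasureTheory Set

/-- The τ-th quantile of a real random variable `Z` under `μ`:
`inf {y : P(Z ≤ y) ≥ τ}`. -/
noncomputable def quantileOf {Ω : Type*} [MeasurableSpace Ω] (μ : Measure Ω)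
    (Z : Ω → ℝ) (τ : ℝ) : ℝ :=
  sInf {y : ℝ | τ ≤ (μ {ω | Z ω ≤ y}).toReal}

theorem survival_incorporated_quantile_indep_of_death_value
    {Ω : Type*} [MeasurableSpace Ω] (μ : Measure Ω) [IsProbabilityMeasure μ]
    (D : Ω → Bool) (Y : Ω → ℝ) (c₁ c₂ τ : ℝ) (hτ : τ ∈ Set.Ioo (0 : ℝ) 1)
    (hD : Measurable D) (hY : Measurable Y)
    -- both constants are strictly below the infimum of the support of Y on {D = 0}:
    (hc : ∃ b : ℝ, c₁ < b ∧ c₂ < b ∧ ∀ᵐ ω ∂μ, D ω = false → b ≤ Y ω)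
    -- P(D = 1) < τ:
    (hdeath : (μ {ω | D ω = true}).toReal < τ)
    (Ytilde₁ Ytilde₂ : Ω → ℝ)
    (h₁ : ∀ ω, Ytilde₁ ω = if D ω = true then c₁ else Y ω)
    (h₂ : ∀ ω, Ytilde₂ ω = if D ω = true then c₂ else Y ω) :
    quantileOf μ Ytilde₁ τ = quantileOf μ Ytilde₂ τ := by
  obtain ⟨b, hbc₁, hbc₂, hae⟩ := hc
  have hnull : μ {ω | ¬ (D ω = false → b ≤ Y ω)} = 0 := by
    rw [← ae_iff] at *; exact hae
  have bound : ∀ (Yt : Ω → ℝ) (c : ℝ) (y : ℝ), y < b →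
      (∀ ω, Yt ω = if D ω = true then c else Y ω) →
      ¬ τ ≤ (μ {ω | Yt ω ≤ y}).toReal := by
    intro Yt c y hy hYt hτle
    have hsub : {ω | Yt ω ≤ y} ⊆
        {ω | D ω = true} ∪ {ω | ¬ (D ω = false → b ≤ Y ω)} := by
      intro ω hω
      by_cases hd : D ω = true
      · exact Or.inl hd
      · refine Or.inr ?_
        intro h
        have hb : b ≤ Y ω := h (by simpa using hd)
        have : Yt ω = Y ω := by rw [hYt]; simp [hd]
        simp only [Set.mem_setOf_eq, this] at hω
        linarith
    have hle : μ {ω | Yt ω ≤ y} ≤ μ {ω | D ω = true} := by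
      calc μ {ω | Yt ω ≤ y} ≤ μ ({ω | D ω = true} ∪ {ω | ¬ (D ω = false → b ≤ Y ω)}) :=
            measure_mono hsub
        _ ≤ μ {ω | D ω = true} + μ {ω | ¬ (D ω = false → b ≤ Y ω)} := measure_union_le _ _
        _ = μ {ω | D ω = true} := by rw [hnull, add_zero]
    have := ENNReal.toReal_mono (measure_ne_top μ _) hle
    linarith
  have hset : {y : ℝ | τ ≤ (μ {ω | Ytilde₁ ω ≤ y}).toReal}
      = {y : ℝ | τ ≤ (μ {ω | Ytilde₂ ω ≤ y}).toReal} := by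
    ext y
    simp only [Set.mem_setOf_eq]
    rcases lt_or_ge y b with hy | hy
    · constructor
      · intro h; exact absurd h (bound _ _ _ hy h₁)
      · intro h; exact absurd h (bound _ _ _ hy h₂)
    · have : {ω | Ytilde₁ ω ≤ y} =ᵐ[μ] {ω | Ytilde₂ ω ≤ y} := by
        filter_upwards [hae] with ω hω
        simp only [eq_iff_iff, Set.mem_setOf_eq, h₁, h₂]
        show (if D ω = true then c₁ else Y ω) ≤ y ↔ (if D ω = true then c₂ else Y ω) ≤ y
        cases hd : D ω with
        | true => simp only [hd, if_true]; constructor <;> intro _ <;> linarith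
        | false => simp [hd]
      rw [measure_congr this]
  unfold quantileOf
  rw [hset]
end

section
/- (Identification of quantiles, point treatment case.) Let (L, A, Ỹ) be random variables where A ∈ {0,1}, and suppose: (i) no unmeasured confounding: A ⊥ Ỹ^(a) given L; (ii) consistency: on {A = a}, Ỹ = Ỹ^(a); (iii) positivity: P(A = a | L) ≥ ε > 0 almost surely. Then for any q ∈ ℝ, E[ 1{A=a} / P(A=a|L) · (1{Ỹ ≤ q} − τ) ] = P(Ỹ^(a) ≤ q) − τ. In particular, if q_τ^(a) is such that P(Ỹ^(a) ≤ q_τ^(a)) = τ, then the weighted estimating function has mean zero at q_τ^(a). -/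
open MeasureTheory ProbabilityTheory

theorem iptw_aux_quantile
    {Ω : Type*} [m0 : MeasurableSpace Ω] [StandardBorelSpace Ω]
    (μ : Measure Ω) [IsProbabilityMeasure μ]
    (m : MeasurableSpace Ω) (hle : m ≤ m0)
    (A : Ω → Bool) (a : Bool)
    (Ytilde Ya : Ω → ℝ) (τ : ℝ)
    (hA : Measurable[m0] A) (hYa : Measurable[m0] Ya)
    (hNUC : CondIndepFun m hle A Ya μ)
    (hcons : ∀ᵐ ω ∂μ, A ω = a → Ytilde ω = Ya ω)
    (e : Ω → ℝ)
    (he : e = μ[(fun ω => if A ω = a then (1 : ℝ) else 0) | m])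
    (ε : ℝ) (hε : 0 < ε) (hεe : ∀ᵐ ω ∂μ, ε ≤ e ω) (q : ℝ) :
    ∫ ω, (if A ω = a then (1 : ℝ) else 0) / e ω *
        ((if Ytilde ω ≤ q then (1 : ℝ) else 0) - τ) ∂μ
      = (μ {ω | Ya ω ≤ q}).toReal - τ := by
  classical
  set fA : Ω → ℝ := fun ω => if A ω = a then (1 : ℝ) else 0 with hfA
  have hsA : MeasurableSet[m0] (A ⁻¹' {a}) := hA (measurableSet_singleton a)
  have hfA_eq : fA = (A ⁻¹' {a}).indicator (fun _ => (1 : ℝ)) := by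
    funext ω; by_cases h : A ω = a <;>
      simp [hfA, Set.indicator_apply, Set.mem_preimage, h]
  have hfA_meas : Measurable[m0] fA := by
    rw [hfA_eq]
    exact (measurable_const : Measurable[m0] fun _ : Ω => (1 : ℝ)).indicator hsA
  -- properties of e
  have he_sm : StronglyMeasurable[m] e := he ▸ stronglyMeasurable_condExp
  have hinv_sm : StronglyMeasurable[m] (fun ω => (e ω)⁻¹) :=
    (he_sm.measurable.inv).stronglyMeasurable
  have hinv_meas : Measurable[m0] (fun ω => (e ω)⁻¹) :=
    ((he_sm.mono hle).measurable).inv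
  have hinv_bound : ∀ᵐ ω ∂μ, |(e ω)⁻¹| ≤ ε⁻¹ := by
    filter_upwards [hεe] with ω hω
    have h0 : 0 < e ω := lt_of_lt_of_le hε hω
    rw [abs_of_nonneg (inv_nonneg.mpr h0.le)]
    exact inv_anti₀ hε hω
  -- integrability of (e)⁻¹ * h for bounded measurable h
  have intE : ∀ h : Ω → ℝ, Measurable[m0] h → (∀ ω, |h ω| ≤ 2) →
      Integrable (fun ω => (e ω)⁻¹ * h ω) μ := by
    intro h hhm hhb
    refine Integrable.mono' (integrable_const (ε⁻¹ * 2))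
      (hinv_meas.mul hhm).aestronglyMeasurable ?_
    filter_upwards [hinv_bound] with ω hω
    calc ‖(e ω)⁻¹ * h ω‖ = |(e ω)⁻¹| * |h ω| := abs_mul _ _
      _ ≤ ε⁻¹ * 2 := mul_le_mul hω (hhb ω) (abs_nonneg _) (inv_nonneg.mpr hε.le)
  have intB : ∀ h : Ω → ℝ, Measurable[m0] h → (∀ ω, |h ω| ≤ 2) → Integrable h μ := by
    intro h hhm hhb
    refine Integrable.mono' (integrable_const (2 : ℝ)) hhm.aestronglyMeasurable ?_
    exact Filter.Eventually.of_forall fun ω => by simpa using hhb ω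
  -- key: ∫ e⁻¹ h = ∫ e⁻¹ E[h|m]
  have key : ∀ h : Ω → ℝ, Measurable[m0] h → (∀ ω, |h ω| ≤ 2) →
      ∫ ω, (e ω)⁻¹ * h ω ∂μ = ∫ ω, (e ω)⁻¹ * (μ[h|m]) ω ∂μ := by
    intro h hhm hhb
    have hint : Integrable h μ := intB h hhm hhb
    have hint2 : Integrable ((fun ω => (e ω)⁻¹) * h) μ := intE h hhm hhb
    have hmul := condExp_mul_of_stronglyMeasurable_left hinv_sm hint2 hint
    calc ∫ ω, (e ω)⁻¹ * h ω ∂μ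
        = ∫ ω, (μ[(fun ω => (e ω)⁻¹) * h|m]) ω ∂μ := (integral_condExp hle).symm
      _ = ∫ ω, ((fun ω => (e ω)⁻¹) * μ[h|m]) ω ∂μ := integral_congr_ae hmul
      _ = _ := rfl
  set fY : Ω → ℝ := fun ω => if Ya ω ≤ q then (1 : ℝ) else 0 with hfY
  have hsY : MeasurableSet[m0] (Ya ⁻¹' Set.Iic q) := hYa measurableSet_Iic
  have hfY_eq : fY = (Ya ⁻¹' Set.Iic q).indicator (fun _ => (1 : ℝ)) := by
    funext ω; by_cases h : Ya ω ≤ q <;>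
      simp [hfY, Set.indicator_apply, Set.mem_preimage, Set.mem_Iic, h]
  have hfY_meas : Measurable[m0] fY := by
    rw [hfY_eq]
    exact (measurable_const : Measurable[m0] fun _ : Ω => (1 : ℝ)).indicator hsY
  have hfY_bd : ∀ ω, |fY ω| ≤ 2 := by
    intro ω; by_cases h : Ya ω ≤ q <;> simp [hfY, h] <;> norm_num
  have hfA_bd : ∀ ω, |fA ω| ≤ 2 := by
    intro ω; by_cases h : A ω = a <;> simp [hfA, h] <;> norm_num
  have hprod_bd : ∀ ω, |fA ω * fY ω| ≤ 2 := by
    intro ω; rw [abs_mul]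
    by_cases h : A ω = a <;> by_cases h' : Ya ω ≤ q <;> simp [hfA, hfY, h, h'] <;> norm_num
  have hprod_meas : Measurable[m0] (fun ω => fA ω * fY ω) := hfA_meas.mul hfY_meas
  -- conditional independence
  have hCI := (condIndepFun_iff_condExp_inter_preimage_eq_mul
      (m' := m) (mΩ := m0) (hm' := hle) (μ := μ) hA hYa).mp hNUC
    {a} (Set.Iic q) (measurableSet_singleton a) measurableSet_Iic
  have hind_eq : (A ⁻¹' {a} ∩ Ya ⁻¹' Set.Iic q).indicator (fun _ => (1 : ℝ))
      = fun ω => fA ω * fY ω := by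
    funext ω
    by_cases h : A ω = a <;> by_cases h' : Ya ω ≤ q <;>
      simp [Set.indicator_apply, Set.mem_inter_iff, Set.mem_preimage, Set.mem_Iic,
        hfA, hfY, h, h']
  have heA : μ[(A ⁻¹' {a}).indicator (fun _ => (1 : ℝ))|m] = e := by
    rw [← hfA_eq, he]
  have hCI' : μ[(fun ω => fA ω * fY ω)|m]
      =ᵐ[μ] fun ω => e ω * (μ[(Ya ⁻¹' Set.Iic q).indicator (fun _ => (1 : ℝ))|m]) ω := by
    rw [← hind_eq, ← heA]
    exact hCI
  -- step 1 : rewrite the integrand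
  have step1 : (fun ω => fA ω / e ω * ((if Ytilde ω ≤ q then (1 : ℝ) else 0) - τ))
      =ᵐ[μ] fun ω => (e ω)⁻¹ * (fA ω * (fY ω - τ)) := by
    filter_upwards [hcons] with ω hω
    by_cases h : A ω = a
    · simp only [hfA, hfY, if_pos h, hω h, one_div]
      ring
    · simp [hfA, h]
  have hfY_int : Integrable fY μ := intB fY hfY_meas hfY_bd
  have I1 : ∫ ω, (e ω)⁻¹ * (fA ω * fY ω) ∂μ = (μ {ω | Ya ω ≤ q}).toReal := by
    rw [key _ hprod_meas hprod_bd]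
    have h1 : (fun ω => (e ω)⁻¹ * (μ[(fun ω => fA ω * fY ω)|m]) ω)
        =ᵐ[μ] μ[fY|m] := by
      have hYc : μ[(Ya ⁻¹' Set.Iic q).indicator (fun _ => (1 : ℝ))|m] = μ[fY|m] := by
        rw [hfY_eq]
      filter_upwards [hCI', hεe] with ω hω h2
      rw [hω, ← hYc]
      have h0 : e ω ≠ 0 := (lt_of_lt_of_le hε h2).ne'
      field_simp
    rw [integral_congr_ae h1, integral_condExp hle]
    have hset : {ω | Ya ω ≤ q} = Ya ⁻¹' Set.Iic q := rfl
    rw [hset, hfY_eq]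
    exact @MeasureTheory.integral_indicator_one Ω m0 μ _ hsY
  have I2 : ∫ ω, (e ω)⁻¹ * fA ω ∂μ = 1 := by
    rw [key fA hfA_meas hfA_bd]
    have h1 : (fun ω => (e ω)⁻¹ * (μ[fA|m]) ω) =ᵐ[μ] fun _ => (1 : ℝ) := by
      filter_upwards [hεe] with ω h2
      rw [← he]
      have h0 : e ω ≠ 0 := (lt_of_lt_of_le hε h2).ne'
      field_simp
    rw [integral_congr_ae h1]
    simp
  have hintP : Integrable (fun ω => (e ω)⁻¹ * (fA ω * fY ω)) μ :=
    intE _ hprod_meas hprod_bd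
  have hintA : Integrable (fun ω => (e ω)⁻¹ * fA ω) μ := intE fA hfA_meas hfA_bd
  calc ∫ ω, fA ω / e ω * ((if Ytilde ω ≤ q then (1 : ℝ) else 0) - τ) ∂μ
      = ∫ ω, (e ω)⁻¹ * (fA ω * (fY ω - τ)) ∂μ := integral_congr_ae step1
    _ = ∫ ω, ((e ω)⁻¹ * (fA ω * fY ω) - τ * ((e ω)⁻¹ * fA ω)) ∂μ := by
        congr 1; funext ω; ring
    _ = ∫ ω, (e ω)⁻¹ * (fA ω * fY ω) ∂μ - ∫ ω, τ * ((e ω)⁻¹ * fA ω) ∂μ :=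
        integral_sub hintP (hintA.const_mul τ)
    _ = (μ {ω | Ya ω ≤ q}).toReal - τ := by
        rw [integral_const_mul, I1, I2, mul_one]

theorem iptw_quantile_identification_point_treatment
    {Ω : Type*} [MeasurableSpace Ω] [StandardBorelSpace Ω]
    (μ : Measure Ω) [IsProbabilityMeasure μ]
    {p : ℕ} (L : Ω → (Fin p → ℝ)) (A : Ω → Bool) (a : Bool)
    (Ytilde Ya : Ω → ℝ) (τ : ℝ) (hτ : τ ∈ Set.Ioo (0 : ℝ) 1)
    (hL : Measurable L) (hA : Measurable A) (hYt : Measurable Ytilde) (hYa : Measurable Ya)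
    (hle : MeasurableSpace.comap L inferInstance ≤ (inferInstance : MeasurableSpace Ω))
    -- (i) no unmeasured confounding: A ⊥ Ỹ^(a) | L
    (hNUC : CondIndepFun (MeasurableSpace.comap L inferInstance) hle A Ya μ)
    -- (ii) consistency: on {A = a}, Ỹ = Ỹ^(a)
    (hcons : ∀ᵐ ω ∂μ, A ω = a → Ytilde ω = Ya ω)
    -- the propensity score P(A = a | L) as a conditional expectation given σ(L)
    (e : Ω → ℝ)
    (he : e = μ[(fun ω => if A ω = a then (1 : ℝ) else 0) |
          MeasurableSpace.comap L inferInstance])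
    -- (iii) positivity: P(A = a | L) ≥ ε > 0 a.s.
    (hpos : ∃ ε : ℝ, 0 < ε ∧ ∀ᵐ ω ∂μ, ε ≤ e ω) :
    (∀ q : ℝ,
      ∫ ω, (if A ω = a then (1 : ℝ) else 0) / e ω *
          ((if Ytilde ω ≤ q then (1 : ℝ) else 0) - τ) ∂μ
        = (μ {ω | Ya ω ≤ q}).toReal - τ) ∧
    (∀ qτ : ℝ, (μ {ω | Ya ω ≤ qτ}).toReal = τ →
      ∫ ω, (if A ω = a then (1 : ℝ) else 0) / e ω *
          ((if Ytilde ω ≤ qτ then (1 : ℝ) else 0) - τ) ∂μ = 0) := by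
  obtain ⟨ε, hε, hεe⟩ := hpos
  have main := fun q => iptw_aux_quantile μ _ hle A a Ytilde Ya τ hA hYa hNUC hcons
    e he ε hε hεe q
  exact ⟨main, fun qτ hq => by rw [main qτ, hq, sub_self]⟩
end

section
/- (Sequential factorization.) In a two-period setting, suppose for k = 0, 1 that A_k is conditionally independent of (L̄^(ā), Ỹ^(ā)) given (Ā_{k−1} = ā_{k−1}, L̄_k), and consistency holds. Then on the event Ā_1 = ā_1, P(A_0 = a_0, A_1 = a_1 | L̄^(ā), Ỹ^(ā)) = P(A_0 = a_0 | L_0) · P(A_1 = a_1 | A_0 = a_0, L̄_1). -/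
open MeasureTheory ProbabilityTheory Filter MeasurableSpace Topology

lemma simpleFunc_comap_factor {Ω γ : Type*} [mγ : MeasurableSpace γ] (W : Ω → γ)
    (s : @SimpleFunc Ω (MeasurableSpace.comap W mγ) ℝ) :
    ∃ k : γ → ℝ, Measurable k ∧ ∀ ω, s ω = k (W ω) := by
  classical
  letI : MeasurableSpace Ω := MeasurableSpace.comap W mγ
  have hT : ∀ c : ℝ, ∃ T : Set γ, MeasurableSet T ∧ W ⁻¹' T = s ⁻¹' {c} := fun c =>
    s.measurableSet_fiber c
  choose T hTmeas hTpre using hT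
  refine ⟨fun x => ∑ c ∈ s.range, Set.indicator (T c) (fun _ => c) x, ?_, ?_⟩
  · exact Finset.measurable_sum _ fun c _ => measurable_const.indicator (hTmeas c)
  · intro ω
    have hmem : ∀ c, W ω ∈ T c ↔ s ω = c := by
      intro c
      rw [← Set.mem_preimage, hTpre]
      simp
    show s ω = ∑ c ∈ s.range, Set.indicator (T c) (fun _ => c) (W ω)
    rw [Finset.sum_eq_single (s ω)]
    · simp [Set.indicator_apply, (hmem (s ω)).mpr rfl]
    · intro c _ hc
      simp only [Set.indicator_apply]
      rw [if_neg]
      intro hmemc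
      exact hc ((hmem c).mp hmemc).symm
    · intro hmemr
      exact absurd (s.mem_range_self ω) hmemr

lemma measurable_comap_factor {Ω γ : Type*} [mγ : MeasurableSpace γ] (W : Ω → γ)
    {g : Ω → ℝ} (hg : Measurable[MeasurableSpace.comap W mγ] g) (hg0 : ∀ ω, 0 ≤ g ω) :
    ∃ h : γ → ℝ, Measurable h ∧ ∀ ω, g ω = h (W ω) := by
  have hsm : StronglyMeasurable[MeasurableSpace.comap W mγ] g :=
    hg.stronglyMeasurable
  have htend : ∀ ω, Tendsto (fun n => hsm.approx n ω) atTop (𝓝 (g ω)) := hsm.tendsto_approx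
  choose k hk hks using fun n => simpleFunc_comap_factor W (hsm.approx n)
  refine ⟨fun x => (limsup (fun n => ENNReal.ofReal (k n x)) atTop).toReal, ?_, ?_⟩
  · exact (Measurable.limsup fun n => ENNReal.measurable_ofReal.comp (hk n)).ennreal_toReal
  · intro ω
    have h1 : Tendsto (fun n => k n (W ω)) atTop (𝓝 (g ω)) := by
      have := htend ω
      simpa only [fun n => hks n ω] using this
    have h2 : Tendsto (fun n => ENNReal.ofReal (k n (W ω))) atTop (𝓝 (ENNReal.ofReal (g ω))) :=
      (ENNReal.continuous_ofReal.tendsto _).comp h1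
    simp only []
    rw [h2.limsup_eq, ENNReal.toReal_ofReal (hg0 ω)]

lemma condExp_indicator_sup_eq {Ω : Type*} {m1 m2 : MeasurableSpace Ω}
    [mΩ : MeasurableSpace Ω] {μ : Measure Ω}
    [IsProbabilityMeasure μ] (hm1 : m1 ≤ mΩ) (hm2 : m2 ≤ mΩ)
    {s : Set Ω} (hs : MeasurableSet s)
    (h : ∀ t : Set Ω, MeasurableSet[m2] t →
      (μ⟦s ∩ t | m1⟧) =ᵐ[μ] fun ω => (μ⟦s | m1⟧) ω * (μ⟦t | m1⟧) ω) :
    (μ⟦s | m1⟧) =ᵐ[μ] μ⟦s | m1 ⊔ m2⟧ := by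
  have hm : m1 ⊔ m2 ≤ mΩ := sup_le hm1 hm2
  set f : Ω → ℝ := Set.indicator s fun _ => (1 : ℝ) with hf_def
  have hf_int : Integrable f μ := (integrable_const (1 : ℝ)).indicator hs
  set g : Ω → ℝ := μ[f|m1] with hg_def
  have hg_int : Integrable g μ := integrable_condExp
  have hg_nonneg : 0 ≤ᵐ[μ] g :=
    condExp_nonneg (Eventually.of_forall fun ω => Set.indicator_nonneg (fun _ _ => zero_le_one) ω)
  have hg_le_one : g ≤ᵐ[μ] fun _ => (1 : ℝ) := by
    have h1 : μ[(fun _ => (1 : ℝ))|m1] = fun _ => (1 : ℝ) := condExp_const hm1 1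
    calc g ≤ᵐ[μ] μ[(fun _ => (1 : ℝ))|m1] := by
          refine condExp_mono hf_int (integrable_const 1) ?_
          exact Eventually.of_forall fun ω => by
            by_cases hω : ω ∈ s <;> simp [f, Set.indicator_apply, hω]
      _ = fun _ => (1 : ℝ) := h1
  have hg_bound : ∀ᵐ x ∂μ, ‖g x‖ ≤ 1 := by
    filter_upwards [hg_nonneg, hg_le_one] with x h0 h1
    have h0' : (0:ℝ) ≤ g x := h0
    have h1' : g x ≤ 1 := h1
    rw [Real.norm_eq_abs, abs_le]
    exact ⟨by linarith, h1'⟩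
  -- integrals agree on the π-system and hence on m1 ⊔ m2
  set π : Set (Set Ω) := {U | ∃ u t, MeasurableSet[m1] u ∧ MeasurableSet[m2] t ∧ U = u ∩ t}
    with hπ_def
  have h_eq : (m1 ⊔ m2) = MeasurableSpace.generateFrom π := by
    refine le_antisymm (sup_le ?_ ?_) (MeasurableSpace.generateFrom_le ?_)
    · intro u hu
      exact measurableSet_generateFrom ⟨u, Set.univ, hu, MeasurableSet.univ,
        (Set.inter_univ u).symm⟩
    · intro u hu
      exact measurableSet_generateFrom ⟨Set.univ, u, MeasurableSet.univ, hu,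
        (Set.univ_inter u).symm⟩
    · rintro U ⟨u, t, hu, ht, rfl⟩
      exact ((le_sup_left : m1 ≤ m1 ⊔ m2) u hu).inter ((le_sup_right : m2 ≤ m1 ⊔ m2) t ht)
  have h_pi : IsPiSystem π := by
    rintro U1 ⟨u1, t1, hu1, ht1, rfl⟩ U2 ⟨u2, t2, hu2, ht2, rfl⟩ -
    refine ⟨u1 ∩ u2, t1 ∩ t2, hu1.inter hu2, ht1.inter ht2, ?_⟩
    ext x; simp only [Set.mem_inter_iff]; tauto
  have key : ∀ U : Set Ω, MeasurableSet[m1 ⊔ m2] U →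
      ∫ x in U, g x ∂μ = ∫ x in U, f x ∂μ := by
    refine @MeasurableSpace.induction_on_inter Ω (m1 ⊔ m2)
      (fun U _ => ∫ x in U, g x ∂μ = ∫ x in U, f x ∂μ) π h_eq h_pi ?_ ?_ ?_ ?_
    · simp
    · rintro U ⟨u, t, hu, ht, rfl⟩
      have huΩ : MeasurableSet u := hm1 u hu
      have htΩ : MeasurableSet t := hm2 t ht
      set ft : Ω → ℝ := Set.indicator t fun _ => (1 : ℝ) with hft_def
      have hft_int : Integrable ft μ := (integrable_const (1 : ℝ)).indicator htΩ
      have hgft_int : Integrable (fun x => g x * ft x) μ :=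
        Integrable.bdd_mul hft_int ((stronglyMeasurable_condExp.mono hm1).aestronglyMeasurable)
          hg_bound
      have hind : ∀ x, Set.indicator t g x = g x * ft x := by
        intro x
        by_cases hx : x ∈ t <;> simp [ft, Set.indicator_apply, hx]
      have hpull : μ[(fun x => g x * ft x)|m1] =ᵐ[μ] fun x => g x * (μ[ft|m1]) x := by
        have := condExp_stronglyMeasurable_mul_of_bound hm1
          (stronglyMeasurable_condExp (f := f)) hft_int 1 hg_bound
        exact this
      calc ∫ x in u ∩ t, g x ∂μ
          = ∫ x in u, Set.indicator t g x ∂μ := (setIntegral_indicator htΩ).symm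
        _ = ∫ x in u, g x * ft x ∂μ := by simp_rw [hind]
        _ = ∫ x in u, (μ[(fun x => g x * ft x)|m1]) x ∂μ :=
            (setIntegral_condExp hm1 hgft_int hu).symm
        _ = ∫ x in u, g x * (μ[ft|m1]) x ∂μ :=
            setIntegral_congr_ae huΩ (hpull.mono fun x hx _ => hx)
        _ = ∫ x in u, (μ⟦s ∩ t|m1⟧) x ∂μ := by
            refine (setIntegral_congr_ae huΩ ((h t ht).mono fun x hx _ => ?_)).symm
            exact hx
        _ = ∫ x in u, Set.indicator (s ∩ t) (fun _ => (1:ℝ)) x ∂μ :=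
            setIntegral_condExp hm1 ((integrable_const (1 : ℝ)).indicator (hs.inter htΩ)) hu
        _ = ∫ x in u ∩ (s ∩ t), (1 : ℝ) ∂μ := setIntegral_indicator (hs.inter htΩ)
        _ = (μ (u ∩ (s ∩ t))).toReal := by simp; rfl
        _ = (μ ((u ∩ t) ∩ s)).toReal := by rw [Set.inter_comm s t, ← Set.inter_assoc]
        _ = ∫ x in (u ∩ t) ∩ s, (1 : ℝ) ∂μ := by simp; rfl
        _ = ∫ x in u ∩ t, f x ∂μ := (setIntegral_indicator hs).symm
    · intro U hU hUeq
      have hUΩ : MeasurableSet U := hm _ hU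
      have htotal : ∫ x, g x ∂μ = ∫ x, f x ∂μ := integral_condExp hm1
      have h1 := integral_add_compl hUΩ hg_int
      have h2 := integral_add_compl hUΩ hf_int
      linarith
    · intro F hFdisj hFmeas hFeq
      rw [integral_iUnion (fun i => hm _ (hFmeas i)) hFdisj hg_int.integrableOn,
        integral_iUnion (fun i => hm _ (hFmeas i)) hFdisj hf_int.integrableOn]
      exact tsum_congr hFeq
  exact ae_eq_condExp_of_forall_setIntegral_eq hm hf_int
    (fun U _ _ => hg_int.integrableOn) (fun U hU _ => key U hU)
    ((stronglyMeasurable_condExp.mono (le_sup_left : m1 ≤ m1 ⊔ m2)).aestronglyMeasurable)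

theorem sequential_factorization_two_periods
    {Ω : Type*} [MeasurableSpace Ω] [StandardBorelSpace Ω]
    (μ : Measure Ω) [IsProbabilityMeasure μ]
    (L0 L1 : Ω → ℝ) (A0 A1 : Ω → Bool) (a0 a1 : Bool)
    -- potential covariate L₁^(a₀) and potential composite outcome Ỹ^(ā) under ā = (a₀, a₁)
    (L1a : Ω → ℝ) (Yt : Ω → ℝ)
    (hL0 : Measurable L0) (hL1 : Measurable L1) (hA0 : Measurable A0) (hA1 : Measurable A1)
    (hL1a : Measurable L1a) (hYt : Measurable Yt)
    (hle0 : MeasurableSpace.comap L0 inferInstance ≤ (inferInstance : MeasurableSpace Ω))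
    (hle1 : MeasurableSpace.comap (fun ω => (A0 ω, L0 ω, L1 ω)) inferInstance
        ≤ (inferInstance : MeasurableSpace Ω))
    -- sequential ignorability at time 0: A₀ ⊥ (L̄^(ā), Ỹ^(ā)) | L₀
    (hNUC0 : CondIndepFun (MeasurableSpace.comap L0 inferInstance) hle0
        A0 (fun ω => (L0 ω, L1a ω, Yt ω)) μ)
    -- sequential ignorability at time 1: A₁ ⊥ (L̄^(ā), Ỹ^(ā)) | A₀, L₀, L₁
    (hNUC1 : CondIndepFun (MeasurableSpace.comap (fun ω => (A0 ω, L0 ω, L1 ω)) inferInstance)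
        hle1 A1 (fun ω => (L0 ω, L1a ω, Yt ω)) μ)
    -- consistency: on {A₀ = a₀}, L₁ = L₁^(a₀)
    (hcons : ∀ᵐ ω ∂μ, A0 ω = a0 → L1 ω = L1a ω) :
    -- on the event Ā₁ = ā₁:
    ∀ᵐ ω ∂μ, A0 ω = a0 → A1 ω = a1 →
      (μ[(fun ω' => if A0 ω' = a0 ∧ A1 ω' = a1 then (1 : ℝ) else 0) |
          MeasurableSpace.comap (fun ω' => (L0 ω', L1a ω', Yt ω')) inferInstance]) ω
        = (μ[(fun ω' => if A0 ω' = a0 then (1 : ℝ) else 0) |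
            MeasurableSpace.comap L0 inferInstance]) ω *
          (μ[(fun ω' => if A1 ω' = a1 then (1 : ℝ) else 0) |
            MeasurableSpace.comap (fun ω' => (A0 ω', L0 ω', L1 ω')) inferInstance]) ω := by
  classical
  have hZ : Measurable fun ω => (L0 ω, L1a ω, Yt ω) := hL0.prodMk (hL1a.prodMk hYt)
  have hW : Measurable fun ω => (A0 ω, L0 ω, L1 ω) := hA0.prodMk (hL0.prodMk hL1)
  -- measurable sets
  have hB0 : MeasurableSet (A0 ⁻¹' {a0}) := hA0 (measurableSet_singleton a0)
  have hB1 : MeasurableSet (A1 ⁻¹' {a1}) := hA1 (measurableSet_singleton a1)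
  -- rewrite the if-then-else functions as indicators
  have hfun2 : (fun ω' => if A0 ω' = a0 ∧ A1 ω' = a1 then (1 : ℝ) else 0)
      = Set.indicator (A0 ⁻¹' {a0} ∩ A1 ⁻¹' {a1}) (fun _ => (1 : ℝ)) := by
    funext ω
    by_cases h : A0 ω = a0 ∧ A1 ω = a1 <;>
      simp [Set.indicator_apply, Set.mem_inter_iff, Set.mem_preimage, Set.mem_singleton_iff, h]
  have hfun0 : (fun ω' => if A0 ω' = a0 then (1 : ℝ) else 0)
      = Set.indicator (A0 ⁻¹' {a0}) (fun _ => (1 : ℝ)) := by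
    funext ω
    by_cases h : A0 ω = a0 <;>
      simp [Set.indicator_apply, Set.mem_preimage, Set.mem_singleton_iff, h]
  have hfun1 : (fun ω' => if A1 ω' = a1 then (1 : ℝ) else 0)
      = Set.indicator (A1 ⁻¹' {a1}) (fun _ => (1 : ℝ)) := by
    funext ω
    by_cases h : A1 ω = a1 <;>
      simp [Set.indicator_apply, Set.mem_preimage, Set.mem_singleton_iff, h]
  rw [hfun2, hfun0, hfun1]
  -- σ-algebra facts
  have hmG : MeasurableSpace.comap (fun ω => (L0 ω, L1a ω, Yt ω)) inferInstance
      ≤ (inferInstance : MeasurableSpace Ω) := hZ.comap_le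
  have hm0G : MeasurableSpace.comap L0 inferInstance
      ≤ MeasurableSpace.comap (fun ω => (L0 ω, L1a ω, Yt ω)) inferInstance := by
    have hcomp : MeasurableSpace.comap L0 (inferInstance : MeasurableSpace ℝ)
        = MeasurableSpace.comap (fun ω => (L0 ω, L1a ω, Yt ω))
          (MeasurableSpace.comap (fun p : ℝ × ℝ × ℝ => p.1) inferInstance) := by
      rw [MeasurableSpace.comap_comp]; rfl
    rw [hcomp]
    exact MeasurableSpace.comap_mono measurable_fst.comap_le
  have hsup : MeasurableSpace.comap (fun ω => (A0 ω, L0 ω, L1 ω)) inferInstance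
      ⊔ MeasurableSpace.comap (fun ω => (L0 ω, L1a ω, Yt ω)) inferInstance
      ≤ (inferInstance : MeasurableSpace Ω) := sup_le hle1 hmG
  -- conditional independence facts
  have fact1 : (μ⟦A1 ⁻¹' {a1} | MeasurableSpace.comap (fun ω => (A0 ω, L0 ω, L1 ω)) inferInstance⟧)
      =ᵐ[μ] μ⟦A1 ⁻¹' {a1} | MeasurableSpace.comap (fun ω => (A0 ω, L0 ω, L1 ω)) inferInstance
        ⊔ MeasurableSpace.comap (fun ω => (L0 ω, L1a ω, Yt ω)) inferInstance⟧ := by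
    refine condExp_indicator_sup_eq hle1 hmG hB1 ?_
    rintro t ⟨t', ht', rfl⟩
    exact (condIndepFun_iff_condExp_inter_preimage_eq_mul hA1 hZ).mp hNUC1 {a1} t'
      (measurableSet_singleton _) ht'
  have fact0 : (μ⟦A0 ⁻¹' {a0} | MeasurableSpace.comap L0 inferInstance⟧)
      =ᵐ[μ] μ⟦A0 ⁻¹' {a0} | MeasurableSpace.comap (fun ω => (L0 ω, L1a ω, Yt ω)) inferInstance⟧ := by
    have key : (μ⟦A0 ⁻¹' {a0} | MeasurableSpace.comap L0 inferInstance⟧)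
        =ᵐ[μ] μ⟦A0 ⁻¹' {a0} | MeasurableSpace.comap L0 inferInstance
          ⊔ MeasurableSpace.comap (fun ω => (L0 ω, L1a ω, Yt ω)) inferInstance⟧ := by
      refine condExp_indicator_sup_eq hle0 hmG hB0 ?_
      rintro t ⟨t', ht', rfl⟩
      exact (condIndepFun_iff_condExp_inter_preimage_eq_mul hA0 hZ).mp hNUC0 {a0} t'
        (measurableSet_singleton _) ht'
    rwa [sup_eq_right.mpr hm0G] at key
  -- the conditional probability of A1 = a1 given (A0, L0, L1) and its bounds
  set g1 : Ω → ℝ := μ[Set.indicator (A1 ⁻¹' {a1}) (fun _ => (1 : ℝ)) |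
      MeasurableSpace.comap (fun ω => (A0 ω, L0 ω, L1 ω)) inferInstance] with hg1_def
  have hg1_nonneg : 0 ≤ᵐ[μ] g1 :=
    condExp_nonneg (Eventually.of_forall fun ω =>
      Set.indicator_nonneg (fun _ _ => zero_le_one) ω)
  have hg1_le_one : g1 ≤ᵐ[μ] fun _ => (1 : ℝ) := by
    have h1 : μ[(fun _ => (1 : ℝ)) |
        MeasurableSpace.comap (fun ω => (A0 ω, L0 ω, L1 ω)) inferInstance] = fun _ => (1 : ℝ) :=
      condExp_const hle1 1
    calc g1 ≤ᵐ[μ] μ[(fun _ => (1 : ℝ)) |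
          MeasurableSpace.comap (fun ω => (A0 ω, L0 ω, L1 ω)) inferInstance] := by
          refine condExp_mono ((integrable_const (1 : ℝ)).indicator hB1) (integrable_const 1) ?_
          exact Eventually.of_forall fun ω => by
            by_cases hω : ω ∈ A1 ⁻¹' {a1} <;> simp [Set.indicator_apply, hω]
      _ = fun _ => (1 : ℝ) := h1
  set g : Ω → ℝ := fun ω => max 0 (min (g1 ω) 1) with hg_def
  have hgg1 : g =ᵐ[μ] g1 := by
    filter_upwards [hg1_nonneg, hg1_le_one] with ω h0 h1
    have h0' : (0 : ℝ) ≤ g1 ω := h0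
    have h1' : g1 ω ≤ 1 := h1
    simp [hg_def, min_eq_left h1', max_eq_right h0']
  have hg_meas : Measurable[MeasurableSpace.comap (fun ω => (A0 ω, L0 ω, L1 ω)) inferInstance] g :=
    measurable_const.max (stronglyMeasurable_condExp.measurable.min measurable_const)
  have hg_nonneg : ∀ ω, 0 ≤ g ω := fun ω => le_max_left _ _
  have hg_le_one : ∀ ω, g ω ≤ 1 := fun ω => max_le zero_le_one (min_le_right _ _)
  -- Doob-Dynkin factorization of g through (A0, L0, L1)
  obtain ⟨h, hh, hhW⟩ := measurable_comap_factor (fun ω => (A0 ω, L0 ω, L1 ω)) hg_meas hg_nonneg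
  set h2 : Bool × ℝ × ℝ → ℝ := fun p => max 0 (min (h p) 1) with hh2_def
  have hh2 : Measurable h2 := measurable_const.max (hh.min measurable_const)
  have hgh2 : ∀ ω, g ω = h2 (A0 ω, L0 ω, L1 ω) := by
    intro ω
    have e := hhW ω
    simp only [hh2_def, ← e]
    rw [min_eq_left (hg_le_one ω), max_eq_right (hg_nonneg ω)]
  have hh2bd : ∀ p, ‖h2 p‖ ≤ 1 := by
    intro p
    rw [Real.norm_eq_abs, abs_le]
    exact ⟨le_trans (by norm_num) (le_max_left _ _),
      max_le zero_le_one (min_le_right _ _)⟩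
  -- the substituted function of (L0, L1a)
  set φ : Ω → ℝ := fun ω => h2 (a0, L0 ω, L1a ω) with hφ_def
  have hφ_meas : Measurable[MeasurableSpace.comap (fun ω => (L0 ω, L1a ω, Yt ω)) inferInstance] φ := by
    have hq : Measurable fun p : ℝ × ℝ × ℝ => ((a0, p.1, p.2.1) : Bool × ℝ × ℝ) :=
      measurable_const.prodMk (measurable_fst.prodMk (measurable_fst.comp measurable_snd))
    exact (hh2.comp hq).comp (comap_measurable _)
  -- tower property
  have htower : (μ⟦A0 ⁻¹' {a0} ∩ A1 ⁻¹' {a1} |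
        MeasurableSpace.comap (fun ω => (L0 ω, L1a ω, Yt ω)) inferInstance⟧)
      =ᵐ[μ] μ[μ[Set.indicator (A0 ⁻¹' {a0} ∩ A1 ⁻¹' {a1}) (fun _ => (1 : ℝ)) |
          MeasurableSpace.comap (fun ω => (A0 ω, L0 ω, L1 ω)) inferInstance
          ⊔ MeasurableSpace.comap (fun ω => (L0 ω, L1a ω, Yt ω)) inferInstance] |
          MeasurableSpace.comap (fun ω => (L0 ω, L1a ω, Yt ω)) inferInstance] :=
    (condExp_condExp_of_le le_sup_right hsup).symm
  have hprod : Set.indicator (A0 ⁻¹' {a0} ∩ A1 ⁻¹' {a1}) (fun _ => (1 : ℝ))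
      = fun ω => Set.indicator (A0 ⁻¹' {a0}) (fun _ => (1 : ℝ)) ω
          * Set.indicator (A1 ⁻¹' {a1}) (fun _ => (1 : ℝ)) ω := by
    funext ω
    by_cases h0 : ω ∈ A0 ⁻¹' {a0} <;> by_cases h1 : ω ∈ A1 ⁻¹' {a1} <;>
      simp [Set.indicator_apply, Set.mem_inter_iff, h0, h1]
  have hB0m1 : MeasurableSet[MeasurableSpace.comap (fun ω => (A0 ω, L0 ω, L1 ω)) inferInstance]
      (A0 ⁻¹' {a0}) :=
    ⟨Prod.fst ⁻¹' {a0}, measurable_fst (measurableSet_singleton a0), rfl⟩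
  have hpull : μ[(fun ω => Set.indicator (A0 ⁻¹' {a0}) (fun _ => (1 : ℝ)) ω
          * Set.indicator (A1 ⁻¹' {a1}) (fun _ => (1 : ℝ)) ω) |
        MeasurableSpace.comap (fun ω => (A0 ω, L0 ω, L1 ω)) inferInstance
        ⊔ MeasurableSpace.comap (fun ω => (L0 ω, L1a ω, Yt ω)) inferInstance]
      =ᵐ[μ] fun ω => Set.indicator (A0 ⁻¹' {a0}) (fun _ => (1 : ℝ)) ω
        * (μ[Set.indicator (A1 ⁻¹' {a1}) (fun _ => (1 : ℝ)) |
          MeasurableSpace.comap (fun ω => (A0 ω, L0 ω, L1 ω)) inferInstance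
          ⊔ MeasurableSpace.comap (fun ω => (L0 ω, L1a ω, Yt ω)) inferInstance]) ω := by
    have hbd : ∀ᵐ x ∂μ, ‖Set.indicator (A0 ⁻¹' {a0}) (fun _ => (1 : ℝ)) x‖ ≤ 1 := by
      refine Eventually.of_forall fun x => ?_
      by_cases hx : x ∈ A0 ⁻¹' {a0} <;> simp [Set.indicator_apply, hx]
    have := condExp_stronglyMeasurable_mul_of_bound hsup
      ((stronglyMeasurable_const.indicator hB0m1).mono le_sup_left)
      ((integrable_const (1 : ℝ)).indicator hB1) 1 hbd
    exact this
  -- on {A0 = a0}, 1_{B0}·g = 1_{B0}·φ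
  have hBφ : (fun ω => Set.indicator (A0 ⁻¹' {a0}) (fun _ => (1 : ℝ)) ω * g ω)
      =ᵐ[μ] fun ω => Set.indicator (A0 ⁻¹' {a0}) (fun _ => (1 : ℝ)) ω * φ ω := by
    filter_upwards [hcons] with ω hω
    by_cases hA : A0 ω = a0
    · have e1 : g ω = h2 (A0 ω, L0 ω, L1 ω) := hgh2 ω
      rw [hA, hω hA] at e1
      rw [hφ_def]
      simp only []
      rw [← e1]
    · have hωB : ω ∉ A0 ⁻¹' {a0} := by simpa using hA
      simp [Set.indicator_apply, hωB]
  -- assemble the chain of a.e. equalities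
  have hE : μ[Set.indicator (A0 ⁻¹' {a0} ∩ A1 ⁻¹' {a1}) (fun _ => (1 : ℝ)) |
        MeasurableSpace.comap (fun ω => (A0 ω, L0 ω, L1 ω)) inferInstance
        ⊔ MeasurableSpace.comap (fun ω => (L0 ω, L1a ω, Yt ω)) inferInstance]
      =ᵐ[μ] fun ω => Set.indicator (A0 ⁻¹' {a0}) (fun _ => (1 : ℝ)) ω * φ ω := by
    rw [hprod]
    refine hpull.trans (EventuallyEq.trans ?_ hBφ)
    filter_upwards [fact1, hgg1] with ω h1 h2'
    rw [← h1, h2']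
  have hchain : (μ⟦A0 ⁻¹' {a0} ∩ A1 ⁻¹' {a1} |
        MeasurableSpace.comap (fun ω => (L0 ω, L1a ω, Yt ω)) inferInstance⟧)
      =ᵐ[μ] fun ω => φ ω * (μ⟦A0 ⁻¹' {a0} | MeasurableSpace.comap L0 inferInstance⟧) ω := by
    refine htower.trans ?_
    have step1 : μ[μ[Set.indicator (A0 ⁻¹' {a0} ∩ A1 ⁻¹' {a1}) (fun _ => (1 : ℝ)) |
          MeasurableSpace.comap (fun ω => (A0 ω, L0 ω, L1 ω)) inferInstance
          ⊔ MeasurableSpace.comap (fun ω => (L0 ω, L1a ω, Yt ω)) inferInstance] |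
          MeasurableSpace.comap (fun ω => (L0 ω, L1a ω, Yt ω)) inferInstance]
        =ᵐ[μ] μ[(fun ω => φ ω * Set.indicator (A0 ⁻¹' {a0}) (fun _ => (1 : ℝ)) ω) |
          MeasurableSpace.comap (fun ω => (L0 ω, L1a ω, Yt ω)) inferInstance] := by
      refine condExp_congr_ae (hE.trans ?_)
      exact Eventually.of_forall fun ω => mul_comm _ _
    refine step1.trans ?_
    have step2 : μ[(fun ω => φ ω * Set.indicator (A0 ⁻¹' {a0}) (fun _ => (1 : ℝ)) ω) |
          MeasurableSpace.comap (fun ω => (L0 ω, L1a ω, Yt ω)) inferInstance]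
        =ᵐ[μ] fun ω => φ ω * (μ[Set.indicator (A0 ⁻¹' {a0}) (fun _ => (1 : ℝ)) |
          MeasurableSpace.comap (fun ω => (L0 ω, L1a ω, Yt ω)) inferInstance]) ω := by
      have := condExp_stronglyMeasurable_mul_of_bound hmG hφ_meas.stronglyMeasurable
        ((integrable_const (1 : ℝ) (μ := μ)).indicator hB0) 1
        (Eventually.of_forall fun x => hh2bd _)
      exact this
    refine step2.trans ?_
    filter_upwards [fact0] with ω h0
    rw [← h0]
  -- conclude pointwise on the event
  filter_upwards [hchain, hcons, hgg1] with ω hch hω hgg hA0e hA1e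
  rw [hch]
  have e1 : g ω = h2 (A0 ω, L0 ω, L1 ω) := hgh2 ω
  rw [hA0e, hω hA0e] at e1
  have : φ ω = g1 ω := by
    rw [hφ_def]
    simp only []
    rw [← e1, hgg]
  rw [this, mul_comm]
end
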